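/- In a k-type Swap Schelling Game (k ≥ 2), if agents i and j perform a profitable swap in σ with deg(σ(i)) ≤ deg(σ(j)) and deg(σ(j)) − deg(σ(i)) ≤ 2, then Φ(σ_ij) ≥ Φ(σ); moreover, Φ(σ_ij) = Φ(σ) is possible only if the utility of agent j in σ lies strictly between 1/2 and 1. -/

import Mathlib

open SimpleGraph Finset
open scoped Classical

noncomputable def ssgUtil {V A : Type*} [Fintype V] [DecidableEq V]
    (G : SimpleGraph V) [DecidableRel G.Adj]
    {k : ℕ} (c : A → Fin k) (σ : A ≃ V) (i : A) : ℚ :=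
  (((G.neighborFinset (σ i)).filter (fun v => c (σ.symm v) = c i)).card : ℚ) /
    (G.degree (σ i) : ℚ)

def ssgSwap {V A : Type*} [DecidableEq V] (σ : A ≃ V) (i j : A) : A ≃ V :=
  σ.trans (Equiv.swap (σ i) (σ j))

def ssgProfitable {V A : Type*} [Fintype V] [DecidableEq V]
    (G : SimpleGraph V) [DecidableRel G.Adj]
    {k : ℕ} (c : A → Fin k) (σ : A ≃ V) (i j : A) : Prop :=
  c i ≠ c j ∧
    ssgUtil G c σ i < ssgUtil G c (ssgSwap σ i j) i ∧
    ssgUtil G c σ j < ssgUtil G c (ssgSwap σ i j) j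

def ssgEquilibrium {V A : Type*} [Fintype V] [DecidableEq V]
    (G : SimpleGraph V) [DecidableRel G.Adj]
    {k : ℕ} (c : A → Fin k) (σ : A ≃ V) : Prop :=
  ∀ i j : A, ¬ ssgProfitable G c σ i j

def ssgLocalEquilibrium {V A : Type*} [Fintype V] [DecidableEq V]
    (G : SimpleGraph V) [DecidableRel G.Adj]
    {k : ℕ} (c : A → Fin k) (σ : A ≃ V) : Prop :=
  ∀ i j : A, G.Adj (σ i) (σ j) → ¬ ssgProfitable G c σ i j

noncomputable def ssgWelfare {V A : Type*} [Fintype V] [DecidableEq V] [Fintype A]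
    (G : SimpleGraph V) [DecidableRel G.Adj]
    {k : ℕ} (c : A → Fin k) (σ : A ≃ V) : ℚ :=
  ∑ i : A, ssgUtil G c σ i

noncomputable def ssgPhi {V A : Type*} [Fintype V] [DecidableEq V]
    (G : SimpleGraph V) [DecidableRel G.Adj]
    {k : ℕ} (c : A → Fin k) (σ : A ≃ V) : ℕ :=
  (G.edgeFinset.filter (fun e => ∀ u ∈ e, ∀ v ∈ e, c (σ.symm u) = c (σ.symm v))).card



section SSGAux

variable {V : Type*} [Fintype V] [DecidableEq V] (G : SimpleGraph V) [DecidableRel G.Adj]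

def ssgMonoP {k : ℕ} (f : V → Fin k) (e : Sym2 V) : Prop := ∀ x ∈ e, ∀ y ∈ e, f x = f y

omit [Fintype V] [DecidableEq V] in
lemma ssgMonoP_pair {k : ℕ} (f : V → Fin k) (x y : V) : ssgMonoP f s(x, y) ↔ f x = f y := by
  constructor
  · intro h; exact h x (Sym2.mem_mk_left x y) y (Sym2.mem_mk_right x y)
  · intro h a ha b hb
    rcases Sym2.mem_iff.mp ha with rfl | rfl <;> rcases Sym2.mem_iff.mp hb with rfl | rfl <;>
      first | rfl | exact h | exact h.symm

omit [Fintype V] [DecidableEq V] in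
lemma ssgMonoP_congr {k : ℕ} {f g : V → Fin k} {e : Sym2 V} (h : ∀ x ∈ e, g x = f x) :
    ssgMonoP f e ↔ ssgMonoP g e := by
  constructor
  · intro H x hx y hy; rw [h x hx, h y hy]; exact H x hx y hy
  · intro H x hx y hy; rw [← h x hx, ← h y hy]; exact H x hx y hy

lemma ssg_phi_split (u w : V) (p : Sym2 V → Prop) :
    (G.edgeFinset.filter p).card =
      (G.edgeFinset.filter fun e => p e ∧ ¬(u ∈ e) ∧ ¬(w ∈ e)).card +
      ((G.edgeFinset.filter fun e => p e ∧ u ∈ e ∧ w ∉ e).card +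
      ((G.edgeFinset.filter fun e => p e ∧ w ∈ e ∧ u ∉ e).card +
      (G.edgeFinset.filter fun e => p e ∧ u ∈ e ∧ w ∈ e).card)) := by
  simp only [Finset.card_filter]
  rw [← Finset.sum_add_distrib, ← Finset.sum_add_distrib, ← Finset.sum_add_distrib]
  refine Finset.sum_congr rfl fun e _ => ?_
  by_cases h1 : u ∈ e <;> by_cases h2 : w ∈ e <;> by_cases h3 : p e <;> simp [h1, h2, h3]

lemma ssg_card_inc {k : ℕ} (f : V → Fin k) (u w : V) (huw : u ≠ w) :
    (G.edgeFinset.filter fun e => ssgMonoP f e ∧ u ∈ e ∧ w ∉ e).card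
      = (((G.neighborFinset u).erase w).filter fun y => f y = f u).card := by
  have himg : (G.edgeFinset.filter fun e => ssgMonoP f e ∧ u ∈ e ∧ w ∉ e)
      = (((G.neighborFinset u).erase w).filter fun y => f y = f u).image (fun x => s(u, x)) := by
    ext e
    simp only [Finset.mem_filter, Finset.mem_image, Finset.mem_erase, mem_neighborFinset,
      mem_edgeFinset]
    constructor
    · rintro ⟨he, hm, hu, hw⟩
      refine ⟨Sym2.Mem.other hu, ⟨⟨?_, ?_⟩, ?_⟩, ?_⟩
      · rintro rfl; exact hw (Sym2.other_mem hu)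
      · have hsp := Sym2.other_spec hu
        rw [← hsp] at he
        exact (mem_edgeSet G).mp he
      · exact hm _ (Sym2.other_mem hu) _ hu
      · exact Sym2.other_spec hu
    · rintro ⟨x, ⟨⟨hxw, hadj⟩, hcol⟩, rfl⟩
      refine ⟨(mem_edgeSet G).mpr hadj, (ssgMonoP_pair f u x).mpr hcol.symm, ?_, ?_⟩
      · exact Sym2.mem_mk_left u x
      · intro hwm
        rcases Sym2.mem_iff.mp hwm with h | h
        · exact huw h.symm
        · exact hxw h.symm
  rw [himg]
  exact Finset.card_image_of_injOn (fun x _ y _ h => by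
    simpa using Sym2.congr_right.mp h)

lemma ssg_card_both {k : ℕ} (f : V → Fin k) (u w : V) (hfuw : f u ≠ f w) :
    (G.edgeFinset.filter fun e => ssgMonoP f e ∧ u ∈ e ∧ w ∈ e).card = 0 := by
  rw [Finset.card_eq_zero, Finset.eq_empty_iff_forall_notMem]
  rintro e he
  rw [Finset.mem_filter] at he
  exact hfuw (he.2.1 u he.2.2.1 w he.2.2.2)

lemma ssg_key_counting {k : ℕ} (f g : V → Fin k) (u w : V) (huw : u ≠ w) (hfuw : f u ≠ f w)
    (hg : ∀ v, g v = f (Equiv.swap u w v)) :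
    (G.edgeFinset.filter (ssgMonoP f)).card
        + (((G.neighborFinset u).erase w).filter fun y => f y = f w).card
        + (((G.neighborFinset w).erase u).filter fun y => f y = f u).card
      = (G.edgeFinset.filter (ssgMonoP g)).card
        + (((G.neighborFinset u).erase w).filter fun y => f y = f u).card
        + (((G.neighborFinset w).erase u).filter fun y => f y = f w).card := by
  have hgu : g u = f w := by rw [hg]; simp
  have hgw : g w = f u := by rw [hg]; simp
  have hgoff : ∀ v, v ≠ u → v ≠ w → g v = f v := by
    intro v h1 h2; rw [hg, Equiv.swap_apply_of_ne_of_ne h1 h2]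
  have h0 : (G.edgeFinset.filter fun e => ssgMonoP f e ∧ ¬(u ∈ e) ∧ ¬(w ∈ e))
      = (G.edgeFinset.filter fun e => ssgMonoP g e ∧ ¬(u ∈ e) ∧ ¬(w ∈ e)) := by
    apply Finset.filter_congr
    intro e _
    by_cases hue : u ∈ e
    · simp [hue]
    by_cases hwe : w ∈ e
    · simp [hwe]
    have hcg : ∀ x ∈ e, g x = f x := fun x hx =>
      hgoff x (fun h => hue (h ▸ hx)) (fun h => hwe (h ▸ hx))
    rw [ssgMonoP_congr hcg]
  have hcu : (((G.neighborFinset u).erase w).filter fun y => g y = g u)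
      = (((G.neighborFinset u).erase w).filter fun y => f y = f w) := by
    apply Finset.filter_congr
    intro y hy
    rw [Finset.mem_erase, mem_neighborFinset] at hy
    rw [hgoff y (G.ne_of_adj hy.2.symm) hy.1, hgu]
  have hcw : (((G.neighborFinset w).erase u).filter fun y => g y = g w)
      = (((G.neighborFinset w).erase u).filter fun y => f y = f u) := by
    apply Finset.filter_congr
    intro y hy
    rw [Finset.mem_erase, mem_neighborFinset] at hy
    rw [hgoff y hy.1 (G.ne_of_adj hy.2.symm), hgw]
  have e1 := ssg_phi_split G u w (ssgMonoP f)
  have e2 := ssg_phi_split G u w (ssgMonoP g)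
  rw [ssg_card_inc G f u w huw, ssg_card_inc G f w u huw.symm, ssg_card_both G f u w hfuw] at e1
  rw [ssg_card_inc G g u w huw, ssg_card_inc G g w u huw.symm,
    ssg_card_both G g u w (by rw [hgu, hgw]; exact hfuw.symm), hcu, hcw, ← h0] at e2
  omega

end SSGAux

lemma ssg_arith (du dw A1 B1 A2 B2 : ℕ) (hdu : 1 ≤ du) (hle : du ≤ dw) (ht : dw ≤ du + 2)
    (hb1 : A1 + B1 ≤ du) (hb2 : A2 + B2 ≤ dw)
    (h1 : A1 * dw < A2 * du) (h2 : B2 * du < B1 * dw) :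
    (A1 + B2 ≤ A2 + B1 ∧ B2 < dw) ∧ (A1 + B2 = A2 + B1 → dw < 2 * B2) := by
  zify at *
  have hA : (A1 : ℤ) + 1 ≤ A2 := by nlinarith
  have hB2 : (B2 : ℤ) < dw := by nlinarith
  constructor
  · refine ⟨?_, hB2⟩
    by_cases hP : (B2 : ℤ) ≤ A2 + 1
    · nlinarith [mul_nonneg (sub_nonneg.mpr hle) (sub_nonneg.mpr hP)]
    · by_contra hcon
      push_neg at hcon
      have key : (A2 + 1 - A1 : ℤ) * dw < B2 * (dw - du) := by nlinarith
      have ht2 : (dw : ℤ) - du ≤ 2 := by linarith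
      nlinarith [mul_nonneg (sub_nonneg.mpr hA) (by linarith : (0:ℤ) ≤ (dw:ℤ))]
  · intro heq
    have key : (A2 - A1 : ℤ) * dw < B2 * (dw - du) := by nlinarith
    nlinarith [mul_nonneg (sub_nonneg.mpr (by linarith : (1:ℤ) ≤ A2 - A1))
      (by linarith : (0:ℤ) ≤ (dw:ℤ))]



theorem stmt2 {V A : Type*} [Fintype V] [DecidableEq V]
    (G : SimpleGraph V) [DecidableRel G.Adj] {k : ℕ} (hk : 2 ≤ k)
    (c : A → Fin k) (σ : A ≃ V) (i j : A)
    (hswap : ssgProfitable G c σ i j)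
    (hdeg : G.degree (σ i) ≤ G.degree (σ j))
    (hdiff : G.degree (σ j) - G.degree (σ i) ≤ 2) :
    ssgPhi G c σ ≤ ssgPhi G c (ssgSwap σ i j) ∧
      (ssgPhi G c (ssgSwap σ i j) = ssgPhi G c σ →
        (1 : ℚ) / 2 < ssgUtil G c σ j ∧ ssgUtil G c σ j < 1) := by
  obtain ⟨hcij, hprofi, hprofj⟩ := hswap
  set u := σ i with hu
  set w := σ j with hw
  set f : V → Fin k := fun v => c (σ.symm v) with hf
  set g : V → Fin k := fun v => c ((ssgSwap σ i j).symm v) with hgdef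
  have huw : u ≠ w := fun h => hcij (by rw [σ.injective h])
  have hfu : f u = c i := by simp [hf, hu]
  have hfw : f w = c j := by simp [hf, hw]
  have hab : f u ≠ f w := by rw [hfu, hfw]; exact hcij
  have hg : ∀ v, g v = f (Equiv.swap u w v) := by
    intro v
    simp [hgdef, hf, ssgSwap, Equiv.symm_swap]
    rfl
  have hgu : g u = f w := by rw [hg]; simp
  have hgw : g w = f u := by rw [hg]; simp
  have hgoff : ∀ v, v ≠ u → v ≠ w → g v = f v := fun v h1 h2 => by
    rw [hg, Equiv.swap_apply_of_ne_of_ne h1 h2]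
  have hσ'i : (ssgSwap σ i j) i = w := by simp [ssgSwap]; exact hw.symm
  have hσ'j : (ssgSwap σ i j) j = u := by simp [ssgSwap]; exact hu.symm
  -- the four counts
  set A1 := (((G.neighborFinset u).erase w).filter fun y => f y = f u).card with hA1
  set B1 := (((G.neighborFinset u).erase w).filter fun y => f y = f w).card with hB1
  set A2 := (((G.neighborFinset w).erase u).filter fun y => f y = f u).card with hA2
  set B2 := (((G.neighborFinset w).erase u).filter fun y => f y = f w).card with hB2
  -- utilities in terms of the counts
  have hUi : ssgUtil G c σ i = (A1 : ℚ) / (G.degree u) := by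
    rw [ssgUtil, hA1]
    congr 2
    rw [Finset.filter_erase, Finset.erase_eq_of_notMem (by
      simp only [Finset.mem_filter, not_and]
      exact fun _ h => hab h.symm)]
    refine congrArg Finset.card (Finset.filter_congr fun y _ => ?_)
    rw [hfu]
  have hUj : ssgUtil G c σ j = (B2 : ℚ) / (G.degree w) := by
    rw [ssgUtil, hB2]
    congr 2
    rw [Finset.filter_erase, Finset.erase_eq_of_notMem (by
      simp only [Finset.mem_filter, not_and]
      exact fun _ h => hab h)]
    refine congrArg Finset.card (Finset.filter_congr fun y _ => ?_)
    rw [hfw]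
  have hUi' : ssgUtil G c (ssgSwap σ i j) i = (A2 : ℚ) / (G.degree w) := by
    rw [ssgUtil, hσ'i, hA2]
    congr 2
    apply congrArg
    ext y
    simp only [Finset.mem_filter, Finset.mem_erase, mem_neighborFinset]
    constructor
    · rintro ⟨hy, hcol⟩
      have hci : c ((ssgSwap σ i j).symm y) = g y := rfl
      rw [hci] at hcol
      have hyu : y ≠ u := by
        rintro rfl
        rw [hgu, hfw] at hcol
        exact hcij hcol.symm
      refine ⟨⟨hyu, hy⟩, ?_⟩
      rw [← hgoff y hyu (G.ne_of_adj hy.symm), hcol, hfu]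
    · rintro ⟨⟨hyu, hy⟩, hcol⟩
      refine ⟨hy, ?_⟩
      have hci : c ((ssgSwap σ i j).symm y) = g y := rfl
      rw [hci, hgoff y hyu (G.ne_of_adj hy.symm), hcol, hfu]
  have hUj' : ssgUtil G c (ssgSwap σ i j) j = (B1 : ℚ) / (G.degree u) := by
    rw [ssgUtil, hσ'j, hB1]
    congr 2
    apply congrArg
    ext y
    simp only [Finset.mem_filter, Finset.mem_erase, mem_neighborFinset]
    constructor
    · rintro ⟨hy, hcol⟩
      have hci : c ((ssgSwap σ i j).symm y) = g y := rfl
      rw [hci] at hcol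
      have hyw : y ≠ w := by
        rintro rfl
        rw [hgw, hfu] at hcol
        exact hcij hcol
      refine ⟨⟨hyw, hy⟩, ?_⟩
      rw [← hgoff y (G.ne_of_adj hy.symm) hyw, hcol, hfw]
    · rintro ⟨⟨hyw, hy⟩, hcol⟩
      refine ⟨hy, ?_⟩
      have hci : c ((ssgSwap σ i j).symm y) = g y := rfl
      rw [hci, hgoff y (G.ne_of_adj hy.symm) hyw, hcol, hfw]
  rw [hUi, hUi'] at hprofi
  rw [hUj, hUj'] at hprofj
  -- positivity of degrees
  have hdu : 0 < G.degree u := by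
    by_contra h
    push_neg at h
    interval_cases hdeg0 : G.degree u
    rw [Nat.cast_zero, div_zero] at hprofj
    exact absurd hprofj (not_lt.mpr (div_nonneg (Nat.cast_nonneg _) (Nat.cast_nonneg _)))
  have hdw : 0 < G.degree w := lt_of_lt_of_le hdu hdeg
  have hduQ : (0 : ℚ) < (G.degree u : ℚ) := by exact_mod_cast hdu
  have hdwQ : (0 : ℚ) < (G.degree w : ℚ) := by exact_mod_cast hdw
  rw [div_lt_div_iff₀ hduQ hdwQ] at hprofi
  rw [div_lt_div_iff₀ hdwQ hduQ] at hprofj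
  have h1 : A1 * G.degree w < A2 * G.degree u := by exact_mod_cast hprofi
  have h2 : B2 * G.degree u < B1 * G.degree w := by exact_mod_cast hprofj
  -- bounds
  have hbound : ∀ (v x : V) (a b : Fin k), a ≠ b →
      (((G.neighborFinset v).erase x).filter fun y => f y = a).card
        + (((G.neighborFinset v).erase x).filter fun y => f y = b).card ≤ G.degree v := by
    intro v x a b hne
    have hdisj : Disjoint (((G.neighborFinset v).erase x).filter fun y => f y = a)
        (((G.neighborFinset v).erase x).filter fun y => f y = b) := by
      rw [Finset.disjoint_filter]
      intro y _ hya hyb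
      exact hne (hya ▸ hyb ▸ rfl)
    calc _ = ((((G.neighborFinset v).erase x).filter fun y => f y = a)
          ∪ (((G.neighborFinset v).erase x).filter fun y => f y = b)).card :=
        (Finset.card_union_of_disjoint hdisj).symm
      _ ≤ ((G.neighborFinset v).erase x).card := Finset.card_le_card
          (Finset.union_subset (Finset.filter_subset _ _) (Finset.filter_subset _ _))
      _ ≤ (G.neighborFinset v).card := Finset.card_le_card (Finset.erase_subset _ _)
      _ = G.degree v := G.card_neighborFinset_eq_degree v
  have hb1 : A1 + B1 ≤ G.degree u := hbound u w (f u) (f w) hab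
  have hb2 : A2 + B2 ≤ G.degree w := hbound w u (f u) (f w) hab
  have hb2' : A2 + B2 ≤ G.degree w := hb2
  -- arithmetic
  obtain ⟨⟨hmain, hB2lt⟩, heqcase⟩ := ssg_arith (G.degree u) (G.degree w) A1 B1 A2 B2
    hdu hdeg (by omega) hb1 (by rw [Nat.add_comm] at hb2' ⊢; omega) h1 h2
  -- counting identity
  have hkey := ssg_key_counting G f g u w huw hab hg
  have hPhif : ssgPhi G c σ = (G.edgeFinset.filter (ssgMonoP f)).card := by
    rw [ssgPhi]
    exact congrArg Finset.card (Finset.filter_congr fun e _ => Iff.rfl)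
  have hPhig : ssgPhi G c (ssgSwap σ i j) = (G.edgeFinset.filter (ssgMonoP g)).card := by
    rw [ssgPhi]
    exact congrArg Finset.card (Finset.filter_congr fun e _ => Iff.rfl)
  rw [← hPhif, ← hPhig, ← hA1, ← hB1, ← hA2, ← hB2] at hkey
  constructor
  · omega
  · intro heq
    rw [heq] at hkey
    have heq2 : A1 + B2 = A2 + B1 := by omega
    have hgt := heqcase heq2
    rw [hUj]
    constructor
    · rw [div_lt_div_iff₀ (by norm_num) hdwQ]
      have : (G.degree w : ℚ) < 2 * B2 := by exact_mod_cast hgt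
      linarith
    · rw [div_lt_one hdwQ]
      exact_mod_cast hB2lt
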